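/- For every integer N ≥ 1, the product over all rationals r in (0,1) with denominator in lowest terms at most N of Γ(r)/√(2π) equals lcm(1, 2, …, N)^(−1/2). -/

import Mathlib

open Real Polynomial

lemma abs_one_sub_exp (θ : ℝ) (h1 : 0 < θ) (h2 : θ < 2*π) :
    ‖(1 - Complex.exp (θ * Complex.I))‖ = 2 * Real.sin (θ/2) := by
  have hsin : 0 < Real.sin (θ/2) := Real.sin_pos_of_pos_of_lt_pi (by linarith) (by linarith)
  have h : 1 - Complex.exp (θ * Complex.I) = Complex.mk (1 - Real.cos θ) (-Real.sin θ) := by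
    rw [show (θ:ℂ) * Complex.I = (θ:ℝ) * Complex.I by norm_cast, Complex.exp_mul_I]
    apply Complex.ext <;> simp [Complex.cos_ofReal_re, Complex.sin_ofReal_re]
  rw [h, Complex.norm_def, Complex.normSq_mk]
  have hc : Real.cos θ = 1 - 2 * Real.sin (θ/2)^2 := by
    have h3 := Real.cos_two_mul (θ/2)
    rw [show 2*(θ/2) = θ by ring] at h3
    have h4 := Real.sin_sq_add_cos_sq (θ/2)
    nlinarith
  have h5 : (1 - Real.cos θ) * (1 - Real.cos θ) + (-Real.sin θ) * (-Real.sin θ)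
      = (2 * Real.sin (θ/2))^2 := by
    have h6 := Real.sin_sq_add_cos_sq θ
    nlinarith
  rw [h5, Real.sqrt_sq (by positivity)]

lemma prod_two_sin (n : ℕ) (hn : 2 ≤ n) :
    ∏ k ∈ (Finset.range n).filter (fun k => Nat.Coprime k n), (2 * Real.sin (π * k / n))
      = (((cyclotomic n ℤ).eval 1 : ℤ) : ℝ) := by
  have hn0 : n ≠ 0 := by omega
  haveI : NeZero n := ⟨hn0⟩
  set ζ : ℂ := Complex.exp (2 * ↑Real.pi * Complex.I / ↑n) with hζdef
  have hζ : IsPrimitiveRoot ζ n := Complex.isPrimitiveRoot_exp n hn0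
  -- complex product identity
  have hC : ∏ k ∈ (Finset.range n).filter (fun k => Nat.Coprime k n), (1 - ζ ^ k)
      = (((cyclotomic n ℤ).eval 1 : ℤ) : ℂ) := by
    have h1 : primitiveRoots n ℂ
        = ((Finset.range n).filter (fun k => Nat.Coprime k n)).image (fun k => ζ ^ k) := by
      ext μ
      simp only [mem_primitiveRoots (by omega : 0 < n), Finset.mem_image, Finset.mem_filter,
        Finset.mem_range]
      rw [hζ.isPrimitiveRoot_iff]
      constructor
      · rintro ⟨i, hi, hc, rfl⟩; exact ⟨i, ⟨hi, hc⟩, rfl⟩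
      · rintro ⟨i, ⟨hi, hc⟩, rfl⟩; exact ⟨i, hi, hc, rfl⟩
    have h2 : (((cyclotomic n ℤ).eval 1 : ℤ) : ℂ) = (cyclotomic n ℂ).eval 1 := by
      have := cyclotomic.eval_apply (1:ℤ) n (Int.castRingHom ℂ)
      simpa using this.symm
    rw [h2, cyclotomic_eq_prod_X_sub_primitiveRoots hζ, eval_prod]
    simp only [eval_sub, eval_X, eval_C]
    rw [h1, Finset.prod_image]
    intro a ha b hb hab
    simp only [Finset.mem_coe, Finset.mem_filter, Finset.mem_range] at ha hb
    exact hζ.pow_inj ha.1 hb.1 hab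
  -- take absolute values
  have hnonneg : (0:ℤ) ≤ (cyclotomic n ℤ).eval 1 := cyclotomic_nonneg n le_rfl
  calc ∏ k ∈ (Finset.range n).filter (fun k => Nat.Coprime k n), (2 * Real.sin (π * k / n))
      = ∏ k ∈ (Finset.range n).filter (fun k => Nat.Coprime k n), ‖(1 - ζ ^ k)‖ := by
        apply Finset.prod_congr rfl
        intro k hk
        simp only [Finset.mem_filter, Finset.mem_range] at hk
        have hk1 : 1 ≤ k := by
          rcases Nat.eq_zero_or_pos k with rfl | h
          · exfalso; have := hk.2; simp [Nat.Coprime] at this; omega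
          · exact h
        have hζk : ζ ^ k = Complex.exp ((2 * π * k / n : ℝ) * Complex.I) := by
          rw [hζdef, ← Complex.exp_nat_mul]
          push_cast
          ring_nf
        rw [hζk, abs_one_sub_exp (2 * π * k / n) (by positivity)
          (by
            rw [div_lt_iff₀ (by positivity : (0:ℝ) < (n:ℝ))]
            have : (k:ℝ) < n := by exact_mod_cast hk.1
            nlinarith [Real.pi_pos])]
        congr 1
        ring
    _ = ‖(∏ k ∈ (Finset.range n).filter (fun k => Nat.Coprime k n), (1 - ζ ^ k))‖ := by
        rw [norm_prod]
    _ = (((cyclotomic n ℤ).eval 1 : ℤ) : ℝ) := by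
        rw [hC]
        rw [Complex.norm_intCast]
        exact_mod_cast abs_of_nonneg hnonneg


lemma pow_dvd_lcm_exists {p j : ℕ} (hp : p.Prime) (hj : 1 ≤ j) :
    ∀ s : Finset ℕ, 0 ∉ s → p ^ j ∣ s.lcm id → ∃ m ∈ s, p ^ j ∣ m := by
  intro s
  induction s using Finset.induction_on with
  | empty =>
      intro _ h
      simp only [Finset.lcm_empty] at h
      exfalso
      have h1 := Nat.le_of_dvd one_pos h
      have h2 : 2 ≤ p ^ j :=
        (Nat.pow_le_pow_right (by omega) hj).trans' (by norm_num)
          |>.trans (Nat.pow_le_pow_left hp.two_le j)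
      omega
  | @insert a s' hnotmem ih =>
      intro h0 h
      rw [Finset.lcm_insert, lcm_eq_nat_lcm] at h
      have ha : a ≠ 0 := fun h' => h0 (by simp [h'])
      have h0' : (0:ℕ) ∉ s' := fun h' => h0 (Finset.mem_insert_of_mem h')
      have hs : Finset.lcm s' id ≠ 0 := by
        simp only [Ne, Finset.lcm_eq_zero_iff]
        rintro ⟨x, hx, hx0⟩
        rw [id_eq] at hx0
        exact h0' (hx0 ▸ hx)
      have hdvd : j ≤ (Nat.lcm (id a) (Finset.lcm s' id)).factorization p :=
        (Nat.Prime.pow_dvd_iff_le_factorization hp (Nat.lcm_ne_zero (by simpa using ha) hs)).mp h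
      rw [Nat.factorization_lcm (by simpa using ha) hs, Finsupp.sup_apply] at hdvd
      rcases le_total ((id a).factorization p) ((Finset.lcm s' id).factorization p) with hle | hle
      · rw [sup_eq_right.mpr hle] at hdvd
        obtain ⟨m, hm, hmd⟩ := ih h0'
          ((Nat.Prime.pow_dvd_iff_le_factorization hp hs).mpr hdvd)
        exact ⟨m, Finset.mem_insert_of_mem hm, hmd⟩
      · rw [sup_eq_left.mpr hle] at hdvd
        exact ⟨a, Finset.mem_insert_self a s',
          (Nat.Prime.pow_dvd_iff_le_factorization hp (by simpa using ha)).mpr hdvd⟩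

lemma lcm_Icc_pos (N : ℕ) : 0 < (Finset.Icc 1 N).lcm id := by
  rcases Nat.eq_zero_or_pos ((Finset.Icc 1 N).lcm id) with h | h
  · exfalso
    rw [Finset.lcm_eq_zero_iff] at h
    obtain ⟨x, hx, hx0⟩ := h
    rw [id_eq] at hx0
    simp only [Finset.coe_Icc, Set.mem_Icc, Finset.mem_Icc] at hx
    omega
  · exact h

lemma lcm_step (N : ℕ) (hN : 1 ≤ N) :
    (((Finset.Icc 1 (N+1)).lcm id : ℕ) : ℤ) =
      (cyclotomic (N+1) ℤ).eval 1 * (((Finset.Icc 1 N).lcm id : ℕ) : ℤ) := by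
  have hins : Finset.Icc 1 (N+1) = insert (N+1) (Finset.Icc 1 N) := by
    ext x; simp only [Finset.mem_Icc, Finset.mem_insert]; omega
  set L : ℕ := (Finset.Icc 1 N).lcm id with hL
  have hLpos : 0 < L := lcm_Icc_pos N
  rw [hins, Finset.lcm_insert, lcm_eq_nat_lcm, id_eq]
  by_cases hpp : IsPrimePow (N+1)
  · -- N+1 = p^k
    obtain ⟨p, k, hp, hk, hpk⟩ := hpp
    replace hp : p.Prime := hp.nat_prime
    haveI : Fact p.Prime := ⟨hp⟩
    obtain ⟨k', rfl⟩ : ∃ k', k = k' + 1 := ⟨k - 1, by omega⟩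
    rw [← hpk, eval_one_cyclotomic_prime_pow]
    -- show Nat.lcm (p^(k'+1)) L = p * L
    have hnd : ¬ p ^ (k'+1) ∣ L := by
      intro hdvd
      obtain ⟨m, hm, hmd⟩ := pow_dvd_lcm_exists hp (by omega) (Finset.Icc 1 N)
        (by simp [Finset.mem_Icc]) hdvd
      rw [Finset.mem_Icc] at hm
      have := Nat.le_of_dvd (by omega) hmd
      omega
    have hd' : p ^ k' ∣ L := by
      apply Finset.dvd_lcm (f := id) (b := p ^ k')
      rw [Finset.mem_Icc]
      constructor
      · exact Nat.one_le_iff_ne_zero.mpr (pow_ne_zero _ hp.pos.ne')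
      · have : p ^ k' < p ^ (k'+1) := Nat.pow_lt_pow_right hp.one_lt (by omega)
        omega
    have hgcd : Nat.gcd (p ^ (k'+1)) L = p ^ k' := by
      have h1 : Nat.gcd (p ^ (k'+1)) L ∣ p ^ (k'+1) := Nat.gcd_dvd_left _ _
      obtain ⟨j, hj, hje⟩ := (Nat.dvd_prime_pow hp).mp h1
      have hj' : j ≤ k' := by
        by_contra hcon
        have : j = k' + 1 := by omega
        rw [this] at hje
        exact hnd (hje ▸ Nat.gcd_dvd_right _ _)
      have h2 : p ^ k' ∣ Nat.gcd (p ^ (k'+1)) L :=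
        Nat.dvd_gcd (pow_dvd_pow p (by omega)) hd'
      rw [hje] at h2 ⊢
      have := (Nat.pow_dvd_pow_iff_le_right hp.one_lt).mp h2
      have : j = k' := by omega
      rw [this]
    have hprod := Nat.gcd_mul_lcm (p ^ (k'+1)) L
    rw [hgcd] at hprod
    have : p ^ k' * Nat.lcm (p ^ (k'+1)) L = p ^ k' * (p * L) := by
      rw [hprod, pow_succ]; ring
    have hfin : Nat.lcm (p ^ (k'+1)) L = p * L :=
      Nat.eq_of_mul_eq_mul_left (pow_pos hp.pos k') this
    rw [hfin]
    push_cast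
    ring
  · -- not a prime power
    have hnpp : ∀ {p : ℕ}, p.Prime → ∀ k : ℕ, p ^ k ≠ N + 1 := by
      intro p hp k hpk
      rcases Nat.eq_zero_or_pos k with rfl | hkpos
      · simp at hpk; omega
      · exact hpp ⟨p, k, hp.prime, hkpos, hpk⟩
    rw [eval_one_cyclotomic_not_prime_pow hnpp, one_mul]
    -- need N+1 ∣ L
    have hdvd : (N+1) ∣ L := by
      set p := (N+1).minFac with hpdef
      have hp : p.Prime := Nat.minFac_prime (by omega)
      set a := p ^ (N+1).factorization p with hadef
      set b := (N+1) / a with hbdef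
      have hab : a * b = N + 1 := Nat.ordProj_mul_ordCompl_eq_self (N+1) p
      have hbne1 : b ≠ 1 := by
        intro h1
        rw [h1, mul_one] at hab
        refine hpp ⟨p, (N+1).factorization p, hp.prime, ?_, hab⟩
        have : p ∣ N + 1 := Nat.minFac_dvd _
        exact (Nat.Prime.factorization_pos_of_dvd hp (by omega) this)
      have hane1 : a ≠ 1 := by
        have : p ∣ N + 1 := Nat.minFac_dvd _
        have h2 : 0 < (N+1).factorization p := Nat.Prime.factorization_pos_of_dvd hp (by omega) this
        have := Nat.one_lt_pow h2.ne' hp.one_lt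
        omega
      have ha0 : a ≠ 0 := pow_ne_zero _ hp.pos.ne'
      have hb0 : b ≠ 0 := by intro h1; rw [h1, mul_zero] at hab; omega
      have h2a : 2 ≤ a := (Nat.two_le_iff a).mpr ⟨ha0, hane1⟩
      have h2b : 2 ≤ b := (Nat.two_le_iff b).mpr ⟨hb0, hbne1⟩
      have hma : a * 2 ≤ a * b := Nat.mul_le_mul_left a h2b
      have hmb : 2 * b ≤ a * b := Nat.mul_le_mul_right b h2a
      have haN : a ≤ N := by omega
      have hbN : b ≤ N := by omega
      have hcop : Nat.Coprime a b := by
        apply Nat.Coprime.pow_left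
        exact Nat.coprime_ordCompl hp (by omega)
      have hda : a ∣ L := Finset.dvd_lcm (by rw [Finset.mem_Icc]; exact ⟨by omega, haN⟩)
      have hdb : b ∣ L := Finset.dvd_lcm (by rw [Finset.mem_Icc]; exact ⟨by omega, hbN⟩)
      rw [← hab]
      exact Nat.Coprime.mul_dvd_of_dvd_of_dvd hcop hda hdb
    have : Nat.lcm (N+1) L = L :=
      Nat.dvd_antisymm (Nat.lcm_dvd hdvd dvd_rfl) (Nat.dvd_lcm_right _ _)
    rw [this]

lemma lcm_eq_prod (N : ℕ) (hN : 1 ≤ N) :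
    (((Finset.Icc 1 N).lcm id : ℕ) : ℤ) = ∏ n ∈ Finset.Icc 2 N, (cyclotomic n ℤ).eval 1 := by
  induction N, hN using Nat.le_induction with
  | base => simp
  | succ N hN ih =>
      have hins : Finset.Icc 2 (N+1) = insert (N+1) (Finset.Icc 2 N) := by
        ext x; simp only [Finset.mem_Icc, Finset.mem_insert]; omega
      have hmem : N + 1 ∉ Finset.Icc 2 N := by simp [Finset.mem_Icc]
      rw [hins, Finset.prod_insert hmem, ← ih, lcm_step N hN]


lemma mem_coprime_filter {n k : ℕ} (hn : 2 ≤ n) :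
    k ∈ (Finset.range n).filter (fun k => Nat.Coprime k n) ↔
      (1 ≤ k ∧ k < n ∧ Nat.Coprime k n) := by
  simp only [Finset.mem_filter, Finset.mem_range]
  constructor
  · rintro ⟨h1, h2⟩
    refine ⟨?_, h1, h2⟩
    rcases Nat.eq_zero_or_pos k with rfl | h
    · exfalso; simp [Nat.Coprime] at h2; omega
    · exact h
  · rintro ⟨h1, h2, h3⟩; exact ⟨h2, h3⟩

lemma cop_sub {n k : ℕ} (h1 : k ≤ n) (h : Nat.Coprime k n) : Nat.Coprime (n - k) n := by
  have h2 : Nat.gcd (n-k) n = Nat.gcd (n-k) k := by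
    have h3 := Nat.gcd_add_self_right (n - k) k
    rw [show k + (n-k) = n by omega] at h3
    exact h3
  unfold Nat.Coprime at *
  rw [h2, Nat.gcd_sub_self_left h1, Nat.gcd_comm]
  exact h

lemma gamma_prod_sq (n : ℕ) (hn : 2 ≤ n) :
    (∏ k ∈ (Finset.range n).filter (fun k => Nat.Coprime k n),
        (Real.Gamma ((k:ℝ)/(n:ℝ)) / Real.sqrt (2*π)))^2
      = (∏ k ∈ (Finset.range n).filter (fun k => Nat.Coprime k n),
          (2 * Real.sin (π * k / n)))⁻¹ := by
  set S := (Finset.range n).filter (fun k => Nat.Coprime k n) with hS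
  set f : ℕ → ℝ := fun k => Real.Gamma ((k:ℝ)/(n:ℝ)) / Real.sqrt (2*π) with hf
  have hmem : ∀ a ∈ S, n - a ∈ S := by
    intro a ha
    rw [hS, mem_coprime_filter hn] at ha ⊢
    exact ⟨by omega, by omega, cop_sub (by omega) ha.2.2⟩
  have hrev : ∏ k ∈ S, f k = ∏ k ∈ S, f (n - k) := by
    refine Finset.prod_nbij' (fun k => n - k) (fun k => n - k) hmem hmem ?_ ?_ ?_
    · intro a ha; rw [hS, mem_coprime_filter hn] at ha; omega
    · intro a ha; rw [hS, mem_coprime_filter hn] at ha; omega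
    · intro a ha; rw [hS, mem_coprime_filter hn] at ha
      congr 1
      omega
  rw [sq]
  nth_rewrite 2 [hrev]
  rw [← Finset.prod_mul_distrib, ← Finset.prod_inv_distrib]
  apply Finset.prod_congr rfl
  intro k hk
  rw [hS, mem_coprime_filter hn] at hk
  have hn0 : (0:ℝ) < n := by positivity
  have hkn : (k:ℝ) < n := by exact_mod_cast hk.2.1
  have hk0 : (0:ℝ) < k := by exact_mod_cast hk.1
  have hsub : ((n - k : ℕ) : ℝ) = (n:ℝ) - k := by
    rw [Nat.cast_sub (by omega)]
  have hsin : 0 < Real.sin (π * k / n) := by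
    apply Real.sin_pos_of_pos_of_lt_pi
    · positivity
    · rw [div_lt_iff₀ hn0]
      nlinarith [Real.pi_pos]
  rw [hf]
  simp only
  rw [hsub, show ((n:ℝ) - k)/n = 1 - (k:ℝ)/n by field_simp]
  rw [div_mul_div_comm, Real.Gamma_mul_Gamma_one_sub, Real.mul_self_sqrt (by positivity)]
  rw [show π * ((k:ℝ)/n) = π * k / n by ring]
  rw [div_div, inv_eq_one_div, div_eq_div_iff (by positivity) (by positivity)]
  ring

lemma num_den_div {n k : ℕ} (hn : 2 ≤ n) (hk1 : 1 ≤ k) (hkn : k < n)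
    (hcop : Nat.Coprime k n) : ((k:ℚ)/(n:ℚ)).num = k ∧ ((k:ℚ)/(n:ℚ)).den = n := by
  have hb0 : (0:ℤ) < (n:ℤ) := by exact_mod_cast (by omega : 0 < n)
  have hco : Nat.Coprime ((k:ℤ)).natAbs ((n:ℤ)).natAbs := by
    simpa using hcop
  have h1 := Rat.num_div_eq_of_coprime hb0 hco
  have h2 := Rat.den_div_eq_of_coprime hb0 hco
  have hcast : (((k:ℤ)):ℚ) / (((n:ℤ)):ℚ) = (k:ℚ)/(n:ℚ) := by push_cast; ring
  rw [hcast] at h1 h2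
  exact ⟨by exact_mod_cast h1, by exact_mod_cast h2⟩


-- MAIN
theorem farey_gamma_prod (N : ℕ) (hN : 1 ≤ N) :
    ∏ᶠ r ∈ {r : ℚ | 0 < r ∧ r < 1 ∧ r.den ≤ N},
        (Real.Gamma (r : ℝ) / Real.sqrt (2 * π)) =
      (((Finset.Icc 1 N).lcm id : ℕ) : ℝ) ^ (-(1 : ℝ) / 2) := by
  classical
  -- Step 1: restructure the finprod as a double product
  have hstruct : ∏ᶠ r ∈ {r : ℚ | 0 < r ∧ r < 1 ∧ r.den ≤ N},
      (Real.Gamma (r : ℝ) / Real.sqrt (2 * π)) =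
      ∏ n ∈ Finset.Icc 2 N, ∏ k ∈ (Finset.range n).filter (fun k => Nat.Coprime k n),
        (Real.Gamma ((k:ℝ)/(n:ℝ)) / Real.sqrt (2 * π)) := by
    set T : Finset ((_ : ℕ) × ℕ) :=
      (Finset.Icc 2 N).sigma (fun n => (Finset.range n).filter (fun k => Nat.Coprime k n)) with hT
    set j : (_ : ℕ) × ℕ → ℚ := fun p => (p.2 : ℚ) / (p.1 : ℚ) with hj
    have hmemT : ∀ p ∈ T, 2 ≤ p.1 ∧ p.1 ≤ N ∧ 1 ≤ p.2 ∧ p.2 < p.1 ∧ Nat.Coprime p.2 p.1 := by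
      rintro ⟨n, k⟩ hp
      rw [hT, Finset.mem_sigma, Finset.mem_Icc] at hp
      have := (mem_coprime_filter hp.1.1).mp hp.2
      exact ⟨hp.1.1, hp.1.2, this.1, this.2.1, this.2.2⟩
    have hnd : ∀ p ∈ T, (j p).num = p.2 ∧ (j p).den = p.1 := by
      intro p hp
      obtain ⟨h1, h2, h3, h4, h5⟩ := hmemT p hp
      exact num_den_div h1 h3 h4 h5
    have hset : {r : ℚ | 0 < r ∧ r < 1 ∧ r.den ≤ N} = ↑(T.image j) := by
      ext r
      simp only [Set.mem_setOf_eq, Finset.coe_image, Set.mem_image, Finset.mem_coe]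
      constructor
      · rintro ⟨h0, h1, hd⟩
        have hnum : 0 < r.num := Rat.num_pos.mpr h0
        have hlt : r.num < r.den := Rat.lt_one_iff_num_lt_denom.mpr h1
        have hd2 : 2 ≤ r.den := by
          rcases Nat.lt_or_ge r.den 2 with h | h
          · exfalso
            have : r.den = 1 := by have := r.den_nz; omega
            omega
          · exact h
        refine ⟨⟨r.den, r.num.toNat⟩, ?_, ?_⟩
        · rw [hT, Finset.mem_sigma, Finset.mem_Icc]
          refine ⟨⟨hd2, hd⟩, ?_⟩
          rw [mem_coprime_filter hd2]
          refine ⟨show 1 ≤ r.num.toNat by omega, show r.num.toNat < r.den by omega, ?_⟩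
          show Nat.Coprime r.num.toNat r.den
          have := r.reduced
          rwa [show r.num.natAbs = r.num.toNat by omega] at this
        · show ((r.num.toNat : ℚ)) / (r.den : ℚ) = r
          have h9 : ((r.num.toNat : ℤ)) = r.num := Int.toNat_of_nonneg hnum.le
          have h10 : ((r.num.toNat : ℚ)) = ((r.num : ℚ)) := by
            exact_mod_cast congrArg (fun z : ℤ => (z : ℚ)) h9
          rw [h10]
          exact Rat.num_div_den r
      · rintro ⟨⟨n, k⟩, hp, rfl⟩
        obtain ⟨h1, h2, h3, h4, h5⟩ := hmemT _ hp
        obtain ⟨hnum, hden⟩ := hnd _ hp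
        dsimp only at h1 h2 h3 h4 h5 hnum hden
        have hn0 : (0:ℚ) < n := by exact_mod_cast (by omega : 0 < n)
        have hk0 : (0:ℚ) < k := by exact_mod_cast (by omega : 0 < k)
        refine ⟨by positivity, ?_, by rw [hden]; exact h2⟩
        rw [hj]; simp only
        rw [div_lt_one hn0]
        exact_mod_cast h4
    rw [hset, finprod_mem_coe_finset, Finset.prod_image ?inj]
    case inj =>
      intro p hp q hq heq
      obtain ⟨hn1, hd1⟩ := hnd p hp
      obtain ⟨hn2, hd2⟩ := hnd q hq
      have e1 : (p.2 : ℤ) = q.2 := by rw [← hn1, ← hn2, heq]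
      have e2 : p.1 = q.1 := by rw [← hd1, ← hd2, heq]
      have e1' : p.2 = q.2 := by exact_mod_cast e1
      exact Sigma.ext e2 (by rw [e1'])
    rw [hT, Finset.prod_sigma]
    apply Finset.prod_congr rfl
    intro n hn
    apply Finset.prod_congr rfl
    intro k hk
    congr 1
    rw [hj]
    push_cast
    ring_nf
  rw [hstruct]
  -- notation
  set P : ℝ := ∏ n ∈ Finset.Icc 2 N, ∏ k ∈ (Finset.range n).filter (fun k => Nat.Coprime k n),
      (Real.Gamma ((k:ℝ)/(n:ℝ)) / Real.sqrt (2 * π)) with hP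
  set x : ℝ := (((Finset.Icc 1 N).lcm id : ℕ) : ℝ) with hx
  have hxpos : 0 < x := by
    rw [hx]
    exact_mod_cast lcm_Icc_pos N
  -- P > 0
  have hPpos : 0 < P := by
    rw [hP]
    apply Finset.prod_pos
    intro n hn
    rw [Finset.mem_Icc] at hn
    apply Finset.prod_pos
    intro k hk
    rw [mem_coprime_filter hn.1] at hk
    have hk0 : (0:ℝ) < k := by exact_mod_cast hk.1
    have hn0 : (0:ℝ) < n := by exact_mod_cast (by omega : 0 < n)
    have hg := Real.Gamma_pos_of_pos (div_pos hk0 hn0)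
    exact div_pos hg (Real.sqrt_pos.mpr (by positivity))
  -- P^2 = x⁻¹
  have hsq : P ^ 2 = x⁻¹ := by
    rw [hP, ← Finset.prod_pow]
    have h1 : ∀ n ∈ Finset.Icc 2 N,
        (∏ k ∈ (Finset.range n).filter (fun k => Nat.Coprime k n),
          (Real.Gamma ((k:ℝ)/(n:ℝ)) / Real.sqrt (2 * π)))^2
        = (∏ k ∈ (Finset.range n).filter (fun k => Nat.Coprime k n),
            (2 * Real.sin (π * k / n)))⁻¹ := by
      intro n hn
      rw [Finset.mem_Icc] at hn
      exact gamma_prod_sq n hn.1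
    rw [Finset.prod_congr rfl h1, Finset.prod_inv_distrib]
    congr 1
    have h2 : ∀ n ∈ Finset.Icc 2 N,
        ∏ k ∈ (Finset.range n).filter (fun k => Nat.Coprime k n), (2 * Real.sin (π * k / n))
        = (((cyclotomic n ℤ).eval 1 : ℤ) : ℝ) := by
      intro n hn
      rw [Finset.mem_Icc] at hn
      exact prod_two_sin n hn.1
    rw [Finset.prod_congr rfl h2, hx]
    rw [← Int.cast_prod, ← lcm_eq_prod N hN]
    norm_cast
  -- RHS squared
  have hR2 : (x ^ (-(1:ℝ)/2)) ^ 2 = x⁻¹ := by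
    rw [← Real.rpow_natCast (x ^ (-(1:ℝ)/2)) 2, ← Real.rpow_mul hxpos.le]
    norm_num
    exact Real.rpow_neg_one x
  have hRpos : 0 < x ^ (-(1:ℝ)/2) := Real.rpow_pos_of_pos hxpos _
  nlinarith [hsq, hR2, hPpos, hRpos]
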